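/- For an irreducible finite Markov chain with transition matrix T, for any two states v0 and vk, the sum over all trajectories from v0 to vk that visit vk only at the final step of the product of transition probabilities along the trajectory equals 1. -/

import Mathlib

set_option linter.unusedSectionVars false

open Finset Filter
open scoped Classical

namespace FPAux

variable {V : Type*} [Fintype V] [DecidableEq V]

/-- first-passage probability: probability of hitting `vk` for the first time at step `k`,
starting from `c`. -/
noncomputable def fpp (T : Matrix V V ℝ) (vk : V) : ℕ → V → ℝ
  | 0 => fun _ => 0
  | 1 => fun c => T c vk
  | (n+2) => fun c => ∑ b, if b = vk then 0 else T c b * fpp T vk (n+1) b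

/-- taboo matrix: `T` with the `vk` column zeroed out. -/
noncomputable def Q (T : Matrix V V ℝ) (vk : V) : Matrix V V ℝ :=
  Matrix.of fun c b => if b = vk then 0 else T c b

/-- survival probability: probability of avoiding `vk` during steps `1..N` starting from `c`. -/
noncomputable def rr (T : Matrix V V ℝ) (vk : V) (N : ℕ) (c : V) : ℝ :=
  ∑ b, (Q T vk ^ N) c b

variable (T : Matrix V V ℝ) (vk : V)
variable (hnonneg : ∀ i j, 0 ≤ T i j) (hrow : ∀ i, ∑ j, T i j = 1)

lemma Q_apply (c b : V) : Q T vk c b = if b = vk then 0 else T c b := rfl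

include hnonneg in
lemma Q_nonneg (c b : V) : 0 ≤ Q T vk c b := by
  rw [Q_apply]; split <;> [rfl; exact hnonneg c b]

include hnonneg in
lemma Q_le_T (c b : V) : Q T vk c b ≤ T c b := by
  rw [Q_apply]; split <;> [exact hnonneg c b; rfl]

include hnonneg in
lemma Tpow_nonneg (k : ℕ) (c b : V) : 0 ≤ (T ^ k) c b := by
  induction k generalizing c b with
  | zero => simp [Matrix.one_apply]; split <;> norm_num
  | succ n ih =>
    rw [pow_succ, Matrix.mul_apply]
    exact Finset.sum_nonneg fun d _ => mul_nonneg (ih c d) (hnonneg d b)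

include hnonneg in
lemma Qpow_nonneg (k : ℕ) (c b : V) : 0 ≤ (Q T vk ^ k) c b := by
  induction k generalizing c b with
  | zero => simp [Matrix.one_apply]; split <;> norm_num
  | succ n ih =>
    rw [pow_succ, Matrix.mul_apply]
    exact Finset.sum_nonneg fun d _ => mul_nonneg (ih c d) (Q_nonneg T vk hnonneg d b)

include hnonneg in
lemma Qpow_le_Tpow (k : ℕ) (c b : V) : (Q T vk ^ k) c b ≤ (T ^ k) c b := by
  induction k generalizing c b with
  | zero => simp
  | succ n ih =>
    rw [pow_succ, pow_succ, Matrix.mul_apply, Matrix.mul_apply]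
    refine Finset.sum_le_sum fun d _ => ?_
    exact mul_le_mul (ih c d) (Q_le_T T vk hnonneg d b)
      (Q_nonneg T vk hnonneg d b) (Tpow_nonneg T hnonneg n c d)

lemma Qpow_vk (k : ℕ) (hk : 1 ≤ k) (c : V) : (Q T vk ^ k) c vk = 0 := by
  obtain ⟨n, rfl⟩ := Nat.exists_eq_add_of_le hk
  rw [add_comm, pow_succ, Matrix.mul_apply]
  exact Finset.sum_eq_zero fun d _ => by simp [Q_apply]

include hrow in
lemma Tpow_row (k : ℕ) (c : V) : ∑ b, (T ^ k) c b = 1 := by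
  induction k generalizing c with
  | zero => simp [Matrix.one_apply]
  | succ n ih =>
    rw [pow_succ']
    simp only [Matrix.mul_apply]
    rw [Finset.sum_comm]
    calc ∑ d, ∑ b, T c d * (T ^ n) d b = ∑ d, T c d * ∑ b, (T ^ n) d b := by
          simp [Finset.mul_sum]
      _ = 1 := by simp only [ih, mul_one]; exact hrow c

lemma rr_zero (c : V) : rr T vk 0 c = 1 := by
  simp [rr, Matrix.one_apply]

lemma rr_succ (N : ℕ) (c : V) : rr T vk (N+1) c = ∑ b, Q T vk c b * rr T vk N b := by
  simp only [rr, pow_succ', Matrix.mul_apply]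
  rw [Finset.sum_comm]
  simp [Finset.mul_sum]

lemma sum_ite_vk (g : V → ℝ) : ∑ b, (if b = vk then 0 else g b) = (∑ b, g b) - g vk := by
  have : ∀ b : V, (if b = vk then 0 else g b) = g b - (if b = vk then g b else 0) := by
    intro b; split <;> simp
  rw [Finset.sum_congr rfl fun b _ => this b, Finset.sum_sub_distrib,
    Finset.sum_ite_eq' Finset.univ vk g]
  simp

include hrow in
lemma rr_sub (N : ℕ) (c : V) : rr T vk N c - rr T vk (N+1) c = fpp T vk (N+1) c := by
  induction N generalizing c with
  | zero =>
    rw [rr_zero, rr_succ]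
    simp only [rr_zero, mul_one]
    have : ∑ b, Q T vk c b = (∑ b, T c b) - T c vk := sum_ite_vk vk _
    rw [this, hrow c, fpp]
    ring
  | succ n ih =>
    rw [rr_succ, rr_succ]
    rw [← Finset.sum_sub_distrib]
    have : ∀ b, Q T vk c b * rr T vk n b - Q T vk c b * rr T vk (n+1) b
        = Q T vk c b * fpp T vk (n+1) b := by
      intro b; rw [← mul_sub, ih]
    rw [Finset.sum_congr rfl fun b _ => this b]
    show _ = fpp T vk (n+2) c
    rw [fpp]
    refine Finset.sum_congr rfl fun b _ => ?_
    rw [Q_apply]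
    split <;> simp

include hnonneg in
lemma rr_nonneg (N : ℕ) (c : V) : 0 ≤ rr T vk N c :=
  Finset.sum_nonneg fun b _ => Qpow_nonneg T vk hnonneg N c b

include hnonneg in
lemma fpp_nonneg (k : ℕ) (c : V) : 0 ≤ fpp T vk k c := by
  induction k generalizing c with
  | zero => simp [fpp]
  | succ n ih =>
    match n with
    | 0 => exact hnonneg c vk
    | m+1 =>
      rw [fpp]
      refine Finset.sum_nonneg fun b _ => ?_
      split
      · rfl
      · exact mul_nonneg (hnonneg c b) (ih b)

include hrow in
lemma sum_fpp (N : ℕ) (v0 : V) :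
    ∑ k ∈ Finset.range (N+1), fpp T vk k v0 = 1 - rr T vk N v0 := by
  induction N with
  | zero => simp [fpp, rr_zero]
  | succ n ih =>
    rw [Finset.sum_range_succ, ih, ← rr_sub T vk hrow n v0]
    ring

include hnonneg hrow in
lemma rr_antitone (c : V) : Antitone (fun N => rr T vk N c) := by
  refine antitone_nat_of_succ_le fun n => ?_
  have := rr_sub T vk hrow n c
  have h2 := fpp_nonneg T vk hnonneg (n+1) c
  linarith

include hnonneg hrow in
lemma rr_le_one (N : ℕ) (c : V) : rr T vk N c ≤ 1 := by
  have := rr_antitone T vk hnonneg hrow c (Nat.zero_le N)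
  simpa [rr_zero] using this

include hnonneg hrow in
lemma rr_le (k : ℕ) (hk : 1 ≤ k) (c : V) : rr T vk k c ≤ 1 - (T ^ k) c vk := by
  have h1 : rr T vk k c = ∑ b, (if b = vk then 0 else (Q T vk ^ k) c b) := by
    rw [rr]
    refine Finset.sum_congr rfl fun b _ => ?_
    split
    · subst b; exact Qpow_vk T vk k hk c
    · rfl
  have h2 : ∑ b, (if b = vk then 0 else (Q T vk ^ k) c b)
      ≤ ∑ b, (if b = vk then 0 else (T ^ k) c b) := by
    refine Finset.sum_le_sum fun b _ => ?_
    split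
    · rfl
    · exact Qpow_le_Tpow T vk hnonneg k c b
  rw [h1]
  refine h2.trans ?_
  rw [sum_ite_vk, Tpow_row T hrow k c]

lemma rr_add (s n : ℕ) (c : V) :
    rr T vk (s + n) c = ∑ b, (Q T vk ^ s) c b * rr T vk n b := by
  simp only [rr, pow_add, Matrix.mul_apply]
  rw [Finset.sum_comm]
  simp [Finset.mul_sum]

include hnonneg hrow in
lemma exists_hit (hirred : ∀ i j : V, ∃ k : ℕ, 0 < (T ^ k) i j) (b : V) :
    ∃ k, 1 ≤ k ∧ 0 < (T ^ k) b vk := by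
  obtain ⟨k, hk⟩ := hirred b vk
  match k with
  | n+1 => exact ⟨n+1, Nat.succ_le_succ (Nat.zero_le n), hk⟩
  | 0 =>
    have hbvk : b = vk := by
      by_contra h
      simp [Matrix.one_apply, h] at hk
    subst hbvk
    -- find c with T b c > 0
    have : ∃ c, 0 < T b c := by
      by_contra h
      push_neg at h
      have hz : ∀ c, T b c = 0 := fun c => le_antisymm (h c) (hnonneg b c)
      have hr := hrow b
      rw [Finset.sum_congr rfl fun c _ => hz c] at hr
      simp at hr
    obtain ⟨c, hc⟩ := this
    obtain ⟨j, hj⟩ := hirred c b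
    refine ⟨1 + j, by omega, ?_⟩
    rw [pow_add, pow_one, Matrix.mul_apply]
    have hterm : 0 < T b c * (T ^ j) c b := mul_pos hc hj
    have hle : T b c * (T ^ j) c b ≤ ∑ d, T b d * (T ^ j) d b :=
      Finset.single_le_sum (fun d _ => mul_nonneg (hnonneg b d) (Tpow_nonneg T hnonneg j d b))
        (Finset.mem_univ c)
    linarith

include hnonneg hrow in
lemma rr_tendsto_zero (hirred : ∀ i j : V, ∃ k : ℕ, 0 < (T ^ k) i j) (v0 : V) :
    Tendsto (fun N => rr T vk N v0) atTop (nhds 0) := by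
  have hV : (Finset.univ : Finset V).Nonempty := ⟨v0, Finset.mem_univ v0⟩
  choose kf hk1 hk2 using exists_hit T vk hnonneg hrow hirred
  set m : ℕ := Finset.univ.sup kf with hm
  have hm1 : 1 ≤ m := le_trans (hk1 v0) (Finset.le_sup (Finset.mem_univ v0))
  have hrm : ∀ b, rr T vk m b < 1 := by
    intro b
    have h1 : rr T vk m b ≤ rr T vk (kf b) b :=
      rr_antitone T vk hnonneg hrow b (Finset.le_sup (Finset.mem_univ b))
    have h2 := rr_le T vk hnonneg hrow (kf b) (hk1 b) b
    have h3 := hk2 b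
    linarith
  set M : ℝ := Finset.univ.sup' hV (fun b => rr T vk m b) with hM
  have hM1 : M < 1 := (Finset.sup'_lt_iff hV).2 fun b _ => hrm b
  have hM0 : 0 ≤ M :=
    le_trans (rr_nonneg T vk hnonneg m v0) (Finset.le_sup' _ (Finset.mem_univ v0))
  have hgeo : ∀ j b, rr T vk (m * j) b ≤ M ^ j := by
    intro j
    induction j with
    | zero => intro b; simpa [rr_zero] using le_refl (1:ℝ)
    | succ n ih =>
      intro b
      have : m * (n + 1) = m + m * n := by ring
      rw [this, rr_add]
      calc ∑ c, (Q T vk ^ m) b c * rr T vk (m*n) c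
          ≤ ∑ c, (Q T vk ^ m) b c * M ^ n := by
            refine Finset.sum_le_sum fun c _ => ?_
            exact mul_le_mul_of_nonneg_left (ih c) (Qpow_nonneg T vk hnonneg m b c)
        _ = rr T vk m b * M ^ n := by rw [← Finset.sum_mul]; rfl
        _ ≤ M * M ^ n := mul_le_mul_of_nonneg_right
            (Finset.le_sup' _ (Finset.mem_univ b)) (pow_nonneg hM0 n)
        _ = M ^ (n+1) := (pow_succ' M n).symm
  have hdiv : Tendsto (fun n : ℕ => M ^ (n / m)) atTop (nhds 0) := by
    refine (tendsto_pow_atTop_nhds_zero_of_lt_one hM0 hM1).comp ?_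
    refine tendsto_atTop_atTop.2 fun b => ⟨b * m, fun n hn => ?_⟩
    exact (Nat.le_div_iff_mul_le (by omega)).2 hn
  refine squeeze_zero (fun n => rr_nonneg T vk hnonneg n v0) (fun n => ?_) hdiv
  calc rr T vk n v0 ≤ rr T vk (m * (n / m)) v0 := by
        refine rr_antitone T vk hnonneg hrow v0 ?_
        rw [mul_comm]; exact Nat.div_mul_le_self n m
    _ ≤ M ^ (n / m) := hgeo (n / m) v0

include hnonneg hrow in
lemma summable_fpp (v0 : V) : Summable (fun k => fpp T vk k v0) := by
  refine summable_of_sum_range_le (c := 1) (fun k => fpp_nonneg T vk hnonneg k v0) fun n => ?_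
  match n with
  | 0 => simp
  | N+1 =>
    rw [sum_fpp T vk hrow N v0]
    have := rr_nonneg T vk hnonneg N v0
    linarith

include hnonneg hrow in
lemma tsum_fpp (hirred : ∀ i j : V, ∃ k : ℕ, 0 < (T ^ k) i j) (v0 : V) :
    ∑' k, fpp T vk k v0 = 1 := by
  have hsum := summable_fpp T vk hnonneg hrow v0
  have h1 : Tendsto (fun N => ∑ k ∈ Finset.range N, fpp T vk k v0) atTop
      (nhds (∑' k, fpp T vk k v0)) := hsum.hasSum.tendsto_sum_nat
  have h2 : Tendsto (fun N => ∑ k ∈ Finset.range (N+1), fpp T vk k v0) atTop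
      (nhds (∑' k, fpp T vk k v0)) := h1.comp (tendsto_add_atTop_nat 1)
  have h3 : Tendsto (fun N => ∑ k ∈ Finset.range (N+1), fpp T vk k v0) atTop (nhds 1) := by
    have : (fun N => ∑ k ∈ Finset.range (N+1), fpp T vk k v0)
        = fun N => 1 - rr T vk N v0 := funext fun N => sum_fpp T vk hrow N v0
    rw [this]
    have := (rr_tendsto_zero T vk hnonneg hrow hirred v0).const_sub 1
    simpa using this
  exact tendsto_nhds_unique h2 h3

/-- The trajectory condition. -/
def Cond (vk v0 : V) (k : ℕ) (p : Fin (k+1) → V) : Prop :=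
  1 ≤ k ∧ p 0 = v0 ∧ p (Fin.last k) = vk ∧
    ∀ i : Fin (k + 1), i ≠ 0 → i ≠ Fin.last k → p i ≠ vk

/-- Sum of trajectory probabilities over trajectories of length exactly `k`. -/
noncomputable def pathSum (T : Matrix V V ℝ) (vk v0 : V) (k : ℕ) : ℝ :=
  ∑ p : Fin (k+1) → V, if Cond vk v0 k p
    then ∏ i : Fin k, T (p i.castSucc) (p i.succ) else 0

/-- cons equivalence -/
def consE (n : ℕ) : V × (Fin (n+1) → V) ≃ (Fin (n+2) → V) where
  toFun x := Fin.cons x.1 x.2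
  invFun p := (p 0, fun j => p j.succ)
  left_inv x := by
    ext j
    · simp
    · simp
  right_inv p := by
    ext j
    exact Fin.cons_self_tail p ▸ rfl

lemma peel (v0 : V) (n : ℕ) :
    pathSum T vk v0 (n+2) = ∑ b, if b = vk then 0 else T v0 b * pathSum T vk b (n+1) := by
  -- normalize RHS
  have hrhs : ∀ b : V, (if b = vk then 0 else T v0 b * pathSum T vk b (n+1))
      = ∑ q : Fin (n+2) → V, if q 0 = b ∧ b ≠ vk ∧ Cond vk b (n+1) q
          then T v0 (q 0) * ∏ i : Fin (n+1), T (q i.castSucc) (q i.succ) else 0 := by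
    intro b
    rw [pathSum]
    by_cases hb : b = vk
    · rw [if_pos hb]
      subst hb
      refine (Finset.sum_eq_zero fun q _ => ?_).symm
      rw [if_neg]
      rintro ⟨-, h, -⟩
      exact h rfl
    · rw [if_neg hb, Finset.mul_sum]
      refine Finset.sum_congr rfl fun q _ => ?_
      by_cases hc : Cond vk b (n+1) q
      · rw [if_pos hc, if_pos ⟨hc.2.1, hb, hc⟩, hc.2.1]
      · rw [if_neg hc, mul_zero, if_neg (fun h => hc h.2.2)]
  have hcond : ∀ (a : V) (q : Fin (n+2) → V),
      Cond vk v0 (n+2) (Fin.cons a q) ↔ (a = v0 ∧ q 0 ≠ vk ∧ Cond vk (q 0) (n+1) q) := by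
    intro a q
    unfold Cond
    have h0l : (0 : Fin (n+2)) ≠ Fin.last (n+1) := by
      simp [Fin.ext_iff]
    constructor
    · rintro ⟨-, h0, hl, ht⟩
      rw [Fin.cons_zero] at h0
      rw [← Fin.succ_last, Fin.cons_succ] at hl
      have hq0 : q 0 ≠ vk := by
        have := ht ((0 : Fin (n+2)).succ) (Fin.succ_ne_zero 0)
          (by intro h; rw [← Fin.succ_last] at h; exact h0l (Fin.succ_injective _ h))
        rwa [Fin.cons_succ] at this
      refine ⟨h0, hq0, Nat.succ_le_succ (Nat.zero_le n), rfl, hl, ?_⟩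
      intro j hj0 hjl
      have := ht j.succ (Fin.succ_ne_zero j)
        (by intro h; rw [← Fin.succ_last] at h; exact hjl (Fin.succ_injective _ h))
      rwa [Fin.cons_succ] at this
    · rintro ⟨ha, hq0, -, -, hlast, ht⟩
      refine ⟨Nat.succ_le_succ (Nat.zero_le (n+1)), by simpa using ha,
        by rw [← Fin.succ_last, Fin.cons_succ]; exact hlast, ?_⟩
      intro i hi0 hil
      obtain ⟨j, rfl⟩ := Fin.eq_succ_of_ne_zero hi0
      rw [Fin.cons_succ]
      by_cases hj : j = 0
      · subst hj; exact hq0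
      · refine ht j hj fun h => ?_
        rw [← Fin.succ_last] at hil
        exact hil (congrArg Fin.succ h)
  have hprod : ∀ (a : V) (q : Fin (n+2) → V),
      (∏ i : Fin (n+2), T ((Fin.cons a q : Fin (n+3) → V) i.castSucc)
        ((Fin.cons a q : Fin (n+3) → V) i.succ))
      = T a (q 0) * ∏ i : Fin (n+1), T (q i.castSucc) (q i.succ) := by
    intro a q
    rw [Fin.prod_univ_succ]
    simp only [Fin.castSucc_zero, Fin.cons_zero, Fin.cons_succ, ← Fin.succ_castSucc]
  have hinner : ∀ q : Fin (n+2) → V,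
      (∑ b, if q 0 = b ∧ b ≠ vk ∧ Cond vk b (n+1) q
        then T v0 (q 0) * ∏ i : Fin (n+1), T (q i.castSucc) (q i.succ) else 0)
      = if q 0 ≠ vk ∧ Cond vk (q 0) (n+1) q
        then T v0 (q 0) * ∏ i : Fin (n+1), T (q i.castSucc) (q i.succ) else 0 := by
    intro q
    rw [Finset.sum_eq_single (q 0)]
    · exact if_congr (by simp) rfl rfl
    · intro b _ hb
      rw [if_neg]
      rintro ⟨h, -⟩
      exact hb h.symm
    · intro h; exact absurd (Finset.mem_univ _) h
  rw [Finset.sum_congr rfl fun b _ => hrhs b, Finset.sum_comm]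
  -- LHS: reindex by consE
  rw [pathSum, ← Equiv.sum_comp (consE (V := V) (n+1)), Fintype.sum_prod_type,
    Finset.sum_comm]
  refine Finset.sum_congr rfl fun q _ => ?_
  rw [hinner q]
  have : ∀ a : V, (if Cond vk v0 (n+2) (consE (V := V) (n+1) (a, q))
      then ∏ i : Fin (n+2), T ((consE (V := V) (n+1) (a, q)) i.castSucc)
        ((consE (V := V) (n+1) (a, q)) i.succ) else 0)
      = if a = v0 ∧ (q 0 ≠ vk ∧ Cond vk (q 0) (n+1) q)
        then T a (q 0) * ∏ i : Fin (n+1), T (q i.castSucc) (q i.succ) else 0 := by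
    intro a
    simp only [consE, Equiv.coe_fn_mk]
    exact if_congr (hcond a q) (hprod a q) rfl
  rw [Finset.sum_congr rfl fun a _ => this a, Finset.sum_eq_single v0]
  · simp
  · intro a _ ha
    exact if_neg fun h => ha h.1
  · intro h; exact absurd (Finset.mem_univ _) h

lemma pathSum_zero (v0 : V) : pathSum T vk v0 0 = 0 := by
  rw [pathSum]
  refine Finset.sum_eq_zero fun p _ => ?_
  rw [if_neg]
  rintro ⟨h, -⟩
  omega

lemma pathSum_one (v0 : V) : pathSum T vk v0 1 = T v0 vk := by
  rw [pathSum, Finset.sum_eq_single (Fin.cons v0 (fun _ => vk) : Fin 2 → V)]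
  · rw [if_pos]
    · simp
    · refine ⟨le_refl 1, by simp, by simp [Fin.last], fun i h0 h1 => ?_⟩
      exfalso
      have hi := i.isLt
      have h0' : (i : ℕ) ≠ 0 := fun h => h0 (Fin.ext h)
      have h1' : (i : ℕ) ≠ 1 := fun h => h1 (Fin.ext h)
      omega
  · intro p _ hp
    rw [if_neg]
    rintro ⟨-, h0, hl, -⟩
    apply hp
    funext i
    fin_cases i
    · simpa using h0
    · simpa [Fin.last] using hl
  · intro h; exact absurd (Finset.mem_univ _) h

lemma pathSum_eq (k : ℕ) : ∀ v0 : V, pathSum T vk v0 k = fpp T vk k v0 := by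
  induction k with
  | zero => intro v0; rw [pathSum_zero]; rfl
  | succ n ih =>
    intro v0
    match n with
    | 0 => rw [pathSum_one]; rfl
    | m+1 =>
      rw [peel T vk v0 m]
      show _ = fpp T vk (m+2) v0
      rw [fpp]
      refine Finset.sum_congr rfl fun b _ => ?_
      rw [ih b]

end FPAux



/-- A trajectory from `v0` to `vk` of positive length that visits `vk` only at the
final step: a sequence `p : Fin (k+1) → V` with `p 0 = v0`, `p (last) = vk`, and no
intermediate index (other than possibly index 0 when `v0 = vk` is excluded by `k ≥ 1`
and the condition below) equal to `vk`. -/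
def FirstPassageTraj {V : Type*} (v0 vk : V) : Type _ :=
  {p : Σ k : ℕ, Fin (k + 1) → V //
    1 ≤ p.1 ∧ p.2 0 = v0 ∧ p.2 (Fin.last p.1) = vk ∧
    ∀ i : Fin (p.1 + 1), i ≠ 0 → i ≠ Fin.last p.1 → p.2 i ≠ vk}

/-- The probability of a trajectory: the product of the transition probabilities
along its steps. -/
def trajProb {V : Type*} (T : V → V → ℝ) {v0 vk : V} (t : FirstPassageTraj v0 vk) : ℝ :=
  ∏ i : Fin t.1.1, T (t.1.2 i.castSucc) (t.1.2 i.succ)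

/-- For an irreducible finite Markov chain with stochastic matrix `T`, the probabilities
of the trajectories from `v0` to `vk` that visit `vk` only at the final step sum to `1`. -/
theorem sum_firstPassage_traj_prob_eq_one {V : Type*} [Fintype V] [DecidableEq V]
    (T : Matrix V V ℝ)
    (hnonneg : ∀ i j, 0 ≤ T i j)
    (hrow : ∀ i, ∑ j, T i j = 1)
    (hirred : ∀ i j : V, ∃ k : ℕ, 0 < (T ^ k) i j)
    (v0 vk : V) :
    ∑' t : FirstPassageTraj v0 vk, trajProb T t = 1 := by
  classical
  let e : FirstPassageTraj v0 vk ≃ (Σ k : ℕ, {p : Fin (k+1) → V // FPAux.Cond vk v0 k p}) :=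
    { toFun := fun t => ⟨t.1.1, ⟨t.1.2, t.2.1, t.2.2.1, t.2.2.2.1, t.2.2.2.2⟩⟩
      invFun := fun s => ⟨⟨s.1, s.2.1⟩, s.2.2.1, s.2.2.2.1, s.2.2.2.2.1, s.2.2.2.2.2⟩
      left_inv := fun t => rfl
      right_inv := fun s => rfl }
  have hnn : ∀ t : FirstPassageTraj v0 vk, 0 ≤ trajProb T t :=
    fun t => Finset.prod_nonneg fun i _ => hnonneg _ _
  have key : (∑' t : FirstPassageTraj v0 vk, ENNReal.ofReal (trajProb T t)) = 1 := by
    rw [← Equiv.tsum_eq e.symm (fun t => ENNReal.ofReal (trajProb T t))]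
    have h1 : ∀ s : (Σ k : ℕ, {p : Fin (k+1) → V // FPAux.Cond vk v0 k p}),
        trajProb T (e.symm s) = ∏ i : Fin s.1, T (s.2.1 i.castSucc) (s.2.1 i.succ) :=
      fun s => rfl
    rw [tsum_congr fun s => by rw [h1 s], ENNReal.tsum_sigma']
    have hk : ∀ k : ℕ,
        (∑' p : {p : Fin (k+1) → V // FPAux.Cond vk v0 k p},
          ENNReal.ofReal (∏ i : Fin k, T (p.1 i.castSucc) (p.1 i.succ)))
        = ENNReal.ofReal (FPAux.fpp T vk k v0) := by
      intro k
      rw [tsum_fintype,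
        ← ENNReal.ofReal_sum_of_nonneg (fun p _ => Finset.prod_nonneg fun i _ => hnonneg _ _)]
      congr 1
      rw [← FPAux.pathSum_eq T vk k v0, FPAux.pathSum,
        ← Finset.sum_filter (FPAux.Cond vk v0 k)
          (fun p => ∏ i : Fin k, T (p i.castSucc) (p i.succ))]
      exact (Finset.sum_subtype (Finset.univ.filter (FPAux.Cond vk v0 k)) (fun x => by simp)
          (fun p => ∏ i : Fin k, T (p i.castSucc) (p i.succ))).symm
    rw [tsum_congr hk,
      ← ENNReal.ofReal_tsum_of_nonneg (fun k => FPAux.fpp_nonneg T vk hnonneg k v0)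
        (FPAux.summable_fpp T vk hnonneg hrow v0),
      FPAux.tsum_fpp T vk hnonneg hrow hirred v0]
    simp
  calc ∑' t : FirstPassageTraj v0 vk, trajProb T t
      = ∑' t : FirstPassageTraj v0 vk, (ENNReal.ofReal (trajProb T t)).toReal :=
        tsum_congr fun t => (ENNReal.toReal_ofReal (hnn t)).symm
    _ = (∑' t : FirstPassageTraj v0 vk, ENNReal.ofReal (trajProb T t)).toReal :=
        (ENNReal.tsum_toReal_eq fun t => ENNReal.ofReal_ne_top).symm
    _ = 1 := by rw [key]; simp
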